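/- Let M be the rank-6 paving matroid on the 24-point ground set E of a Steiner system S(5,8,24) whose size-6 circuits are exactly the 6-subsets contained in some block V with |V ∩ {e,f}| = 1, for fixed distinct e, f ∈ E. Then |B_{ef}| = 7315, |B_{e¬f}| = |B_{¬ef}| = 22638, and |B_{¬e¬f}| = 72149, where B_{xy} partitions the bases by containment of e and f. -/

import Mathlib

open scoped symmDiff

variable {α : Type*} [DecidableEq α]

/-- A Steiner system S(5,8,24): a 24-element point set `E` together with a family `V` of
8-element blocks such that every 5-element subset of `E` is contained in exactly one block. -/
def IsSteiner_5_8_24 (E : Finset α) (V : Finset (Finset α)) : Prop :=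
  E.card = 24 ∧ (∀ b ∈ V, b ⊆ E ∧ b.card = 8) ∧
    ∀ S ⊆ E, S.card = 5 → ∃! b, b ∈ V ∧ S ⊆ b

lemma helper_card (s t : Finset α) (ht : t ⊆ s) (n : ℕ) (hn : t.card ≤ n) :
    ((s.powersetCard n).filter (fun X => t ⊆ X)).card = (s.card - t.card).choose (n - t.card) := by
  rw [show s.card - t.card = (s \ t).card from (Finset.card_sdiff_of_subset ht).symm,
      ← Finset.card_powersetCard]
  apply Finset.card_nbij' (fun X => X \ t) (fun Y => Y ∪ t)
  · intro X hX
    simp only [Finset.mem_coe, Finset.mem_filter, Finset.mem_powersetCard] at *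
    exact ⟨Finset.sdiff_subset_sdiff hX.1.1 le_rfl, by rw [Finset.card_sdiff_of_subset hX.2, hX.1.2]⟩
  · intro Y hY
    simp only [Finset.mem_coe, Finset.mem_filter, Finset.mem_powersetCard, Finset.mem_sdiff] at *
    have hd : Disjoint Y t :=
      Finset.disjoint_left.2 fun a haY hat => ((Finset.mem_sdiff.1 (hY.1 haY)).2 hat)
    refine ⟨⟨Finset.union_subset (hY.1.trans Finset.sdiff_subset) ht, ?_⟩,
      Finset.subset_union_right⟩
    rw [Finset.card_union_of_disjoint hd, hY.2]
    omega
  · intro X hX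
    simp only [Finset.mem_coe, Finset.mem_filter, Finset.mem_powersetCard] at hX
    exact Finset.sdiff_union_of_subset hX.2
  · intro Y hY
    simp only [Finset.mem_coe, Finset.mem_powersetCard] at hY
    have hd : Disjoint Y t :=
      Finset.disjoint_left.2 fun a haY hat => ((Finset.mem_sdiff.1 (hY.1 haY)).2 hat)
    beta_reduce
    rw [Finset.union_sdiff_right, Finset.sdiff_eq_self_iff_disjoint.2 hd]

lemma block_unique {E : Finset α} {V : Finset (Finset α)} (h : IsSteiner_5_8_24 E V)
    {b1 b2 X : Finset α} (hb1 : b1 ∈ V) (hb2 : b2 ∈ V) (hX : 5 ≤ X.card)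
    (h1 : X ⊆ b1) (h2 : X ⊆ b2) : b1 = b2 := by
  obtain ⟨S, hSX, hS5⟩ := Finset.exists_subset_card_eq hX
  have hSE : S ⊆ E := (hSX.trans h1).trans (h.2.1 b1 hb1).1
  obtain ⟨b, -, hu⟩ := h.2.2 S hSE hS5
  rw [hu b1 ⟨hb1, hSX.trans h1⟩, hu b2 ⟨hb2, hSX.trans h2⟩]

lemma blocks_count {E : Finset α} {V : Finset (Finset α)} (h : IsSteiner_5_8_24 E V)
    (P : Finset α) (hP : P ⊆ E) (hk5 : P.card ≤ 5) :
    (V.filter (fun b => P ⊆ b)).card * (8 - P.card).choose (5 - P.card)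
      = (24 - P.card).choose (5 - P.card) := by
  have key : (E.powersetCard 5).filter (fun S => P ⊆ S)
      = (V.filter (fun b => P ⊆ b)).biUnion
        (fun b => (b.powersetCard 5).filter (fun S => P ⊆ S)) := by
    ext S
    simp only [Finset.mem_filter, Finset.mem_powersetCard, Finset.mem_biUnion]
    constructor
    · rintro ⟨⟨hSE, hS5⟩, hPS⟩
      obtain ⟨b, ⟨hbV, hSb⟩, -⟩ := h.2.2 S hSE hS5
      exact ⟨b, ⟨hbV, hPS.trans hSb⟩, ⟨hSb, hS5⟩, hPS⟩
    · rintro ⟨b, ⟨hbV, -⟩, ⟨hSb, hS5⟩, hPS⟩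
      exact ⟨⟨hSb.trans (h.2.1 b hbV).1, hS5⟩, hPS⟩
  have hdis : ∀ b1 ∈ V.filter (fun b => P ⊆ b), ∀ b2 ∈ V.filter (fun b => P ⊆ b), b1 ≠ b2 →
      Disjoint ((b1.powersetCard 5).filter (fun S => P ⊆ S))
        ((b2.powersetCard 5).filter (fun S => P ⊆ S)) := by
    intro b1 hb1 b2 hb2 hne
    rw [Finset.disjoint_left]
    intro S hS1 hS2
    simp only [Finset.mem_filter, Finset.mem_powersetCard] at hS1 hS2
    exact hne (block_unique h (Finset.mem_filter.1 hb1).1 (Finset.mem_filter.1 hb2).1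
      (le_of_eq hS1.1.2.symm) hS1.1.1 hS2.1.1)
  have hkey := congrArg Finset.card key
  rw [Finset.card_biUnion hdis] at hkey
  rw [helper_card E P hP 5 hk5, h.1] at hkey
  rw [hkey, Finset.sum_congr rfl (fun b hb => ?_), Finset.sum_const, smul_eq_mul, mul_comm]
  have hbV := Finset.mem_filter.1 hb
  rw [helper_card b P hbV.2 5 hk5, (h.2.1 b hbV.1).2]

lemma biUnion_card_eq {E : Finset α} {V : Finset (Finset α)} (h : IsSteiner_5_8_24 E V)
    (W : Finset (Finset α)) (hW : W ⊆ V) (fib : Finset α → Finset (Finset α))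
    (hfib : ∀ b ∈ W, ∀ X ∈ fib b, X ⊆ b ∧ X.card = 6) (m : ℕ)
    (hcard : ∀ b ∈ W, (fib b).card = m) :
    (W.biUnion fib).card = W.card * m := by
  rw [Finset.card_biUnion, Finset.sum_congr rfl hcard, Finset.sum_const, smul_eq_mul]
  intro b1 h1 b2 h2 hne
  rw [Function.onFun, Finset.disjoint_left]
  intro X hX1 hX2
  obtain ⟨hs1, hc1⟩ := hfib b1 h1 X hX1
  obtain ⟨hs2, -⟩ := hfib b2 h2 X hX2
  exact hne (block_unique h (hW h1) (hW h2) (by omega) hs1 hs2)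

lemma inter_pair {b : Finset α} {e f : α} (heb : e ∈ b) (hfb : f ∉ b) :
    b ∩ ({e, f} : Finset α) = {e} := by
  ext x
  simp only [Finset.mem_inter, Finset.mem_insert, Finset.mem_singleton]
  constructor
  · rintro ⟨hxb, rfl | rfl⟩
    · rfl
    · exact absurd hxb hfb
  · rintro rfl
    exact ⟨heb, Or.inl rfl⟩

lemma inter_pair' {b : Finset α} {e f : α} (hfb : f ∈ b) (heb : e ∉ b) :
    b ∩ ({e, f} : Finset α) = {f} := by
  ext x
  simp only [Finset.mem_inter, Finset.mem_insert, Finset.mem_singleton]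
  constructor
  · rintro ⟨hxb, rfl | rfl⟩
    · exact absurd hxb heb
    · rfl
  · rintro rfl
    exact ⟨hfb, Or.inr rfl⟩

lemma two_le_inter {b : Finset α} {e f : α} (hef : e ≠ f) (heb : e ∈ b) (hfb : f ∈ b) :
    2 ≤ (b ∩ ({e, f} : Finset α)).card := by
  have h1 : ({e, f} : Finset α) ⊆ b ∩ {e, f} := by
    intro x hx
    simp only [Finset.mem_insert, Finset.mem_singleton] at hx
    rcases hx with rfl | rfl
    · simp [heb]
    · simp [hfb]
  calc 2 = ({e, f} : Finset α).card := by
        rw [Finset.card_insert_of_notMem (by simpa using hef), Finset.card_singleton]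
    _ ≤ _ := Finset.card_le_card h1

lemma pair_cases {b : Finset α} {e f : α} (hef : e ≠ f)
    (hc : (b ∩ ({e, f} : Finset α)).card = 1) :
    (e ∈ b ∧ f ∉ b) ∨ (e ∉ b ∧ f ∈ b) := by
  have hnboth : ¬(e ∈ b ∧ f ∈ b) := fun ⟨h1, h2⟩ => by
    have := two_le_inter hef h1 h2; omega
  obtain ⟨x, hx⟩ := Finset.card_pos.1 (by omega : 0 < (b ∩ ({e, f} : Finset α)).card)
  simp only [Finset.mem_inter, Finset.mem_insert, Finset.mem_singleton] at hx
  obtain ⟨hxb, rfl | rfl⟩ := hx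
  · exact Or.inl ⟨hxb, fun hfb => hnboth ⟨hxb, hfb⟩⟩
  · exact Or.inr ⟨fun heb => hnboth ⟨heb, hxb⟩, hxb⟩

lemma split_card {U Cr B : Finset (Finset α)} (hsub : Cr ⊆ U)
    (hB : B = U.filter (fun X => X ∉ Cr)) (p : Finset α → Prop) [DecidablePred p] :
    (Cr.filter p).card + (B.filter p).card = (U.filter p).card := by
  have h1 : (U.filter p).filter (fun X => X ∈ Cr) = Cr.filter p := by
    ext X
    simp only [Finset.mem_filter]
    constructor
    · rintro ⟨⟨-, hpX⟩, hXCr⟩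
      exact ⟨hXCr, hpX⟩
    · rintro ⟨hXCr, hpX⟩
      exact ⟨⟨hsub hXCr, hpX⟩, hXCr⟩
  have h2 : (U.filter p).filter (fun X => X ∉ Cr) = B.filter p := by
    rw [hB, Finset.filter_filter, Finset.filter_filter]
    exact Finset.filter_congr fun X _ => by tauto
  rw [← h1, ← h2]
  exact Finset.card_filter_add_card_filter_not _

/-- For the rank-6 paving matroid on the 24 points of S(5,8,24) whose size-6 circuits are the
6-subsets contained in some block meeting `{e, f}` in exactly one point, the partition of the
bases by membership of `e` and `f` has sizes 7315, 22638, 22638 and 72149. -/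
theorem stmt13 (E : Finset α) (V : Finset (Finset α)) (h : IsSteiner_5_8_24 E V)
    (e f : α) (he : e ∈ E) (hf : f ∈ E) (hef : e ≠ f)
    (Cr B : Finset (Finset α))
    (hCr : Cr = (E.powersetCard 6).filter
      (fun C => ∃ b ∈ V, (b ∩ ({e, f} : Finset α)).card = 1 ∧ C ⊆ b))
    (hB : B = (E.powersetCard 6).filter (fun X => X ∉ Cr)) :
    (B.filter (fun X => e ∈ X ∧ f ∈ X)).card = 7315 ∧
      (B.filter (fun X => e ∈ X ∧ f ∉ X)).card = 22638 ∧
      (B.filter (fun X => e ∉ X ∧ f ∈ X)).card = 22638 ∧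
      (B.filter (fun X => e ∉ X ∧ f ∉ X)).card = 72149 := by
  obtain ⟨hE24, hblk, -⟩ := id h
  have hCrsub : Cr ⊆ E.powersetCard 6 := by rw [hCr]; exact Finset.filter_subset _ _
  have hpair2 : ({e, f} : Finset α).card = 2 := by
    rw [Finset.card_insert_of_notMem (by simpa using hef), Finset.card_singleton]
  -- block counts
  have hVe : (V.filter (fun b => ({e} : Finset α) ⊆ b)).card = 253 := by
    have := blocks_count h {e} (by simpa using he) (by simp)
    rw [Finset.card_singleton] at this
    have c1 : Nat.choose (8 - 1) (5 - 1) = 35 := by decide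
    have c2 : Nat.choose (24 - 1) (5 - 1) = 8855 := by decide
    rw [c1, c2] at this
    omega
  have hVf : (V.filter (fun b => ({f} : Finset α) ⊆ b)).card = 253 := by
    have := blocks_count h {f} (by simpa using hf) (by simp)
    rw [Finset.card_singleton] at this
    have c1 : Nat.choose (8 - 1) (5 - 1) = 35 := by decide
    have c2 : Nat.choose (24 - 1) (5 - 1) = 8855 := by decide
    rw [c1, c2] at this
    omega
  have hVef : (V.filter (fun b => ({e, f} : Finset α) ⊆ b)).card = 77 := by
    have := blocks_count h {e, f} (Finset.insert_subset he (by simpa using hf)) (by omega)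
    rw [hpair2] at this
    have c1 : Nat.choose (8 - 2) (5 - 2) = 20 := by decide
    have c2 : Nat.choose (24 - 2) (5 - 2) = 1540 := by decide
    rw [c1, c2] at this
    omega
  set V1 := V.filter (fun b => e ∈ b ∧ f ∉ b) with hV1
  set V2 := V.filter (fun b => e ∉ b ∧ f ∈ b) with hV2
  have hV1card : V1.card = 176 := by
    have hsplit := Finset.card_filter_add_card_filter_not
      (s := V.filter (fun b => ({e} : Finset α) ⊆ b)) (p := fun b => f ∈ b)
    rw [Finset.filter_filter, Finset.filter_filter] at hsplit
    have e1 : V.filter (fun b => ({e} : Finset α) ⊆ b ∧ f ∈ b)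
        = V.filter (fun b => ({e, f} : Finset α) ⊆ b) := by
      apply Finset.filter_congr
      intro b _
      simp [Finset.insert_subset_iff]
    have e2 : V.filter (fun b => ({e} : Finset α) ⊆ b ∧ ¬f ∈ b) = V1 := by
      apply Finset.filter_congr
      intro b _
      simp
    rw [e1, e2, hVef, hVe] at hsplit
    omega
  have hV2card : V2.card = 176 := by
    have hsplit := Finset.card_filter_add_card_filter_not
      (s := V.filter (fun b => ({f} : Finset α) ⊆ b)) (p := fun b => e ∈ b)
    rw [Finset.filter_filter, Finset.filter_filter] at hsplit
    have e1 : V.filter (fun b => ({f} : Finset α) ⊆ b ∧ e ∈ b)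
        = V.filter (fun b => ({e, f} : Finset α) ⊆ b) := by
      apply Finset.filter_congr
      intro b _
      simp [Finset.insert_subset_iff]
      tauto
    have e2 : V.filter (fun b => ({f} : Finset α) ⊆ b ∧ ¬e ∈ b) = V2 := by
      apply Finset.filter_congr
      intro b _
      simp
      tauto
    rw [e1, e2, hVef, hVf] at hsplit
    omega
  -- circuit counts
  have hC1 : (Cr.filter (fun X => e ∈ X ∧ f ∈ X)).card = 0 := by
    rw [Finset.card_eq_zero, Finset.eq_empty_iff_forall_notMem]
    intro X hX
    rw [Finset.mem_filter, hCr, Finset.mem_filter] at hX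
    obtain ⟨⟨-, b, hbV, hbc, hXb⟩, heX, hfX⟩ := hX
    have := two_le_inter hef (hXb heX) (hXb hfX)
    omega
  have hC2 : (Cr.filter (fun X => e ∈ X ∧ f ∉ X)).card = 3696 := by
    have hkey : Cr.filter (fun X => e ∈ X ∧ f ∉ X)
        = V1.biUnion (fun b => (b.powersetCard 6).filter (fun X => ({e} : Finset α) ⊆ X)) := by
      ext X
      simp only [hCr, hV1, Finset.mem_filter, Finset.mem_powersetCard, Finset.mem_biUnion,
        Finset.singleton_subset_iff]
      constructor
      · rintro ⟨⟨⟨hXE, hX6⟩, b, hbV, hbc, hXb⟩, heX, hfX⟩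
        rcases pair_cases hef hbc with ⟨heb, hfb⟩ | ⟨heb, -⟩
        · exact ⟨b, ⟨hbV, heb, hfb⟩, ⟨hXb, hX6⟩, heX⟩
        · exact absurd (hXb heX) heb
      · rintro ⟨b, ⟨hbV, heb, hfb⟩, ⟨hXb, hX6⟩, heX⟩
        refine ⟨⟨⟨hXb.trans (hblk b hbV).1, hX6⟩, b, hbV, ?_, hXb⟩, heX,
          fun hfX => hfb (hXb hfX)⟩
        rw [inter_pair heb hfb, Finset.card_singleton]
    have hfibsub : ∀ b ∈ V1, ∀ X ∈ (b.powersetCard 6).filter (fun X => ({e} : Finset α) ⊆ X),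
        X ⊆ b ∧ X.card = 6 := by
      intro b _ X hX
      simp only [Finset.mem_filter, Finset.mem_powersetCard] at hX
      exact ⟨hX.1.1, hX.1.2⟩
    have hfibcard : ∀ b ∈ V1,
        ((b.powersetCard 6).filter (fun X => ({e} : Finset α) ⊆ X)).card = 21 := by
      intro b hb
      rw [hV1, Finset.mem_filter] at hb
      obtain ⟨hbV, heb, -⟩ := hb
      rw [helper_card b {e} (by simpa using heb) 6 (by simp), (hblk b hbV).2,
        Finset.card_singleton]
      decide
    rw [hkey, biUnion_card_eq h V1 (hV1 ▸ Finset.filter_subset _ _) _ hfibsub 21 hfibcard,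
      hV1card]
  have hC3 : (Cr.filter (fun X => e ∉ X ∧ f ∈ X)).card = 3696 := by
    have hkey : Cr.filter (fun X => e ∉ X ∧ f ∈ X)
        = V2.biUnion (fun b => (b.powersetCard 6).filter (fun X => ({f} : Finset α) ⊆ X)) := by
      ext X
      simp only [hCr, hV2, Finset.mem_filter, Finset.mem_powersetCard, Finset.mem_biUnion,
        Finset.singleton_subset_iff]
      constructor
      · rintro ⟨⟨⟨hXE, hX6⟩, b, hbV, hbc, hXb⟩, heX, hfX⟩
        rcases pair_cases hef hbc with ⟨-, hfb⟩ | ⟨heb, hfb⟩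
        · exact absurd (hXb hfX) hfb
        · exact ⟨b, ⟨hbV, heb, hfb⟩, ⟨hXb, hX6⟩, hfX⟩
      · rintro ⟨b, ⟨hbV, heb, hfb⟩, ⟨hXb, hX6⟩, hfX⟩
        refine ⟨⟨⟨hXb.trans (hblk b hbV).1, hX6⟩, b, hbV, ?_, hXb⟩,
          fun heX => heb (hXb heX), hfX⟩
        rw [inter_pair' hfb heb, Finset.card_singleton]
    have hfibsub : ∀ b ∈ V2, ∀ X ∈ (b.powersetCard 6).filter (fun X => ({f} : Finset α) ⊆ X),
        X ⊆ b ∧ X.card = 6 := by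
      intro b _ X hX
      simp only [Finset.mem_filter, Finset.mem_powersetCard] at hX
      exact ⟨hX.1.1, hX.1.2⟩
    have hfibcard : ∀ b ∈ V2,
        ((b.powersetCard 6).filter (fun X => ({f} : Finset α) ⊆ X)).card = 21 := by
      intro b hb
      rw [hV2, Finset.mem_filter] at hb
      obtain ⟨hbV, -, hfb⟩ := hb
      rw [helper_card b {f} (by simpa using hfb) 6 (by simp), (hblk b hbV).2,
        Finset.card_singleton]
      decide
    rw [hkey, biUnion_card_eq h V2 (hV2 ▸ Finset.filter_subset _ _) _ hfibsub 21 hfibcard,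
      hV2card]
  have hV12disj : Disjoint V1 V2 := by
    rw [hV1, hV2, Finset.disjoint_left]
    intro b hb1 hb2
    exact (Finset.mem_filter.1 hb2).2.1 (Finset.mem_filter.1 hb1).2.1
  have hV12sub : V1 ∪ V2 ⊆ V := by
    intro b hb
    rcases Finset.mem_union.1 hb with hb | hb
    · exact Finset.filter_subset _ _ (hV1 ▸ hb)
    · exact Finset.filter_subset _ _ (hV2 ▸ hb)
  have hV12inter : ∀ b ∈ V1 ∪ V2, (b ∩ ({e, f} : Finset α)).card = 1 := by
    intro b hb
    rcases Finset.mem_union.1 hb with hb | hb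
    · rw [hV1, Finset.mem_filter] at hb
      rw [inter_pair hb.2.1 hb.2.2, Finset.card_singleton]
    · rw [hV2, Finset.mem_filter] at hb
      rw [inter_pair' hb.2.2 hb.2.1, Finset.card_singleton]
  have hC4 : (Cr.filter (fun X => e ∉ X ∧ f ∉ X)).card = 2464 := by
    have hkey : Cr.filter (fun X => e ∉ X ∧ f ∉ X)
        = (V1 ∪ V2).biUnion (fun b => (b \ ({e, f} : Finset α)).powersetCard 6) := by
      ext X
      simp only [hCr, Finset.mem_filter, Finset.mem_powersetCard, Finset.mem_biUnion]
      constructor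
      · rintro ⟨⟨⟨hXE, hX6⟩, b, hbV, hbc, hXb⟩, heX, hfX⟩
        have hXb' : X ⊆ b \ ({e, f} : Finset α) := by
          intro x hx
          simp only [Finset.mem_sdiff, Finset.mem_insert, Finset.mem_singleton]
          refine ⟨hXb hx, ?_⟩
          rintro (rfl | rfl)
          exacts [heX hx, hfX hx]
        rcases pair_cases hef hbc with ⟨heb, hfb⟩ | ⟨heb, hfb⟩
        · exact ⟨b, Finset.mem_union_left _ (hV1 ▸ Finset.mem_filter.2 ⟨hbV, heb, hfb⟩),
            hXb', hX6⟩
        · exact ⟨b, Finset.mem_union_right _ (hV2 ▸ Finset.mem_filter.2 ⟨hbV, heb, hfb⟩),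
            hXb', hX6⟩
      · rintro ⟨b, hb12, hXb, hX6⟩
        have hbV : b ∈ V := hV12sub hb12
        have hXb2 : X ⊆ b := hXb.trans Finset.sdiff_subset
        refine ⟨⟨⟨hXb2.trans (hblk b hbV).1, hX6⟩, b, hbV, hV12inter b hb12, hXb2⟩, ?_, ?_⟩
        · intro heX
          have := hXb heX
          simp at this
        · intro hfX
          have := hXb hfX
          simp at this
    have hcard12 : (V1 ∪ V2).card = 352 := by
      rw [Finset.card_union_of_disjoint hV12disj, hV1card, hV2card]
    have hfibsub : ∀ b ∈ V1 ∪ V2, ∀ X ∈ (b \ ({e, f} : Finset α)).powersetCard 6,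
        X ⊆ b ∧ X.card = 6 := by
      intro b _ X hX
      rw [Finset.mem_powersetCard] at hX
      exact ⟨hX.1.trans Finset.sdiff_subset, hX.2⟩
    have hfibcard : ∀ b ∈ V1 ∪ V2, ((b \ ({e, f} : Finset α)).powersetCard 6).card = 7 := by
      intro b hb
      have hbV : b ∈ V := hV12sub hb
      have h78 : (b \ ({e, f} : Finset α)).card = 7 := by
        have := Finset.card_inter_add_card_sdiff b ({e, f} : Finset α)
        rw [hV12inter b hb, (hblk b hbV).2] at this
        omega
      rw [Finset.card_powersetCard, h78]
      decide
    rw [hkey, biUnion_card_eq h (V1 ∪ V2) hV12sub _ hfibsub 7 hfibcard, hcard12]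
  -- total counts
  have hT1 : ((E.powersetCard 6).filter (fun X => e ∈ X ∧ f ∈ X)).card = 7315 := by
    have e1 : (E.powersetCard 6).filter (fun X => e ∈ X ∧ f ∈ X)
        = (E.powersetCard 6).filter (fun X => ({e, f} : Finset α) ⊆ X) := by
      apply Finset.filter_congr
      intro X _
      simp [Finset.insert_subset_iff]
    rw [e1, helper_card E {e, f} (Finset.insert_subset he (by simpa using hf)) 6 (by omega),
      hE24, hpair2]
    decide
  have hT2 : ((E.powersetCard 6).filter (fun X => e ∈ X ∧ f ∉ X)).card = 26334 := by
    have e1 : (E.powersetCard 6).filter (fun X => e ∈ X ∧ f ∉ X)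
        = ((E.erase f).powersetCard 6).filter (fun X => ({e} : Finset α) ⊆ X) := by
      ext X
      simp only [Finset.mem_filter, Finset.mem_powersetCard, Finset.subset_erase,
        Finset.singleton_subset_iff]
      tauto
    rw [e1, helper_card (E.erase f) {e}
      (by simp [Finset.mem_erase, Ne, hef, he]) 6 (by simp),
      Finset.card_erase_of_mem hf, hE24, Finset.card_singleton]
    decide
  have hT3 : ((E.powersetCard 6).filter (fun X => e ∉ X ∧ f ∈ X)).card = 26334 := by
    have e1 : (E.powersetCard 6).filter (fun X => e ∉ X ∧ f ∈ X)
        = ((E.erase e).powersetCard 6).filter (fun X => ({f} : Finset α) ⊆ X) := by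
      ext X
      simp only [Finset.mem_filter, Finset.mem_powersetCard, Finset.subset_erase,
        Finset.singleton_subset_iff]
      tauto
    rw [e1, helper_card (E.erase e) {f}
      (by simp [Finset.mem_erase, Ne, hef.symm, hf]) 6 (by simp),
      Finset.card_erase_of_mem he, hE24, Finset.card_singleton]
    decide
  have hT4 : ((E.powersetCard 6).filter (fun X => e ∉ X ∧ f ∉ X)).card = 74613 := by
    have e1 : (E.powersetCard 6).filter (fun X => e ∉ X ∧ f ∉ X)
        = (E \ ({e, f} : Finset α)).powersetCard 6 := by
      ext X
      simp only [Finset.mem_filter, Finset.mem_powersetCard, Finset.subset_sdiff,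
        Finset.disjoint_insert_right, Finset.disjoint_singleton_right]
      tauto
    rw [e1, Finset.card_powersetCard, Finset.card_sdiff_of_subset
      (Finset.insert_subset he (by simpa using hf)), hpair2, hE24]
    decide
  have s1 := split_card hCrsub hB (fun X => e ∈ X ∧ f ∈ X)
  have s2 := split_card hCrsub hB (fun X => e ∈ X ∧ f ∉ X)
  have s3 := split_card hCrsub hB (fun X => e ∉ X ∧ f ∈ X)
  have s4 := split_card hCrsub hB (fun X => e ∉ X ∧ f ∉ X)
  refine ⟨?_, ?_, ?_, ?_⟩ <;> omega
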